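/- Let Q be a finite set, T_1,…,T_s : Q → ℕ, and let (p_n)_{n ∈ ℕ} be a sequence of strictly positive functions p_n : Q → ℝ such that for each n the function log p_n lies in the real linear span of {T_1,…,T_s}. If p_n converges pointwise to q : Q → ℝ, then for every integer vector k : Q → ℤ with ∑_{x ∈ Q} k(x)·T_j(x) = 0 for all j, the limit satisfies ∏_{x ∈ Q} q(x)^{k(x)⁺} = ∏_{x ∈ Q} q(x)^{k(x)⁻}. That is, the implicit binomial equations are satisfied by all limits of the positive log-linear model. -/

import Mathlib

/-- If a sequence of strictly positive log-linear distributions (with design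
functions `T₁,…,T_s`) converges pointwise to `q`, then `q` satisfies every implicit binomial
equation associated with an integer vector `k` orthogonal to all the `T_j`: the binomial
equations hold for all limits of the positive log-linear model. -/
theorem limits_of_loglinear_satisfy_implicit_binomial
    {Q : Type*} [Fintype Q] (s : ℕ) (T : Fin s → Q → ℕ)
    (p : ℕ → Q → ℝ) (hp : ∀ n x, 0 < p n x)
    (hlog : ∀ n, (fun x => Real.log (p n x)) ∈
      Submodule.span ℝ (Set.range fun j : Fin s => fun x : Q => (T j x : ℝ)))
    (q : Q → ℝ)
    (hlim : ∀ x, Filter.Tendsto (fun n => p n x) Filter.atTop (nhds (q x)))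
    (k : Q → ℤ) (hk : ∀ j, ∑ x, k x * (T j x : ℤ) = 0) :
    ∏ x, q x ^ (k x).toNat = ∏ x, q x ^ (-(k x)).toNat := by
  classical
  -- Step 1: the linear functional f ↦ ∑ k x * f x vanishes on the span
  have key : ∀ f : Q → ℝ,
      f ∈ Submodule.span ℝ (Set.range fun j : Fin s => fun x : Q => (T j x : ℝ)) →
      ∑ x, (k x : ℝ) * f x = 0 := by
    intro f hf
    induction hf using Submodule.span_induction with
    | mem g hg =>
      obtain ⟨j, rfl⟩ := hg
      have h := hk j
      have h' : ((∑ x, k x * (T j x : ℤ) : ℤ) : ℝ) = 0 := by rw [h]; norm_num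
      push_cast at h'
      simpa using h'
    | zero => simp
    | add g h _ _ hg hh =>
      simp only [Pi.add_apply, mul_add, Finset.sum_add_distrib, hg, hh, add_zero]
    | smul c g _ hg =>
      simp only [Pi.smul_apply, smul_eq_mul, mul_left_comm, ← Finset.mul_sum, hg, mul_zero]
  -- Step 2: each p n satisfies the binomial equation
  have heq : ∀ n, ∏ x, p n x ^ (k x).toNat = ∏ x, p n x ^ (-(k x)).toNat := by
    intro n
    have hA : (0 : ℝ) < ∏ x, p n x ^ (k x).toNat :=
      Finset.prod_pos fun x _ => pow_pos (hp n x) _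
    have hB : (0 : ℝ) < ∏ x, p n x ^ (-(k x)).toNat :=
      Finset.prod_pos fun x _ => pow_pos (hp n x) _
    have hlogeq : Real.log (∏ x, p n x ^ (k x).toNat)
        = Real.log (∏ x, p n x ^ (-(k x)).toNat) := by
      rw [Real.log_prod (f := fun x => p n x ^ (k x).toNat) (fun x _ => (pow_pos (hp n x) _).ne'),
        Real.log_prod (f := fun x => p n x ^ (-(k x)).toNat) (fun x _ => (pow_pos (hp n x) _).ne')]
      simp only [Real.log_pow]
      have hz := key _ (hlog n)
      have : ∑ x, (((k x).toNat : ℝ) - ((-(k x)).toNat : ℝ)) * Real.log (p n x) = 0 := by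
        have hcast : ∀ x : Q, (((k x).toNat : ℝ) - ((-(k x)).toNat : ℝ)) = (k x : ℝ) := by
          intro x
          have := Int.toNat_sub_toNat_neg (k x)
          exact_mod_cast congrArg (fun z : ℤ => (z : ℝ)) this
        simpa only [hcast] using hz
      have := Finset.sum_sub_distrib (s := (Finset.univ : Finset Q))
        (f := fun x => ((k x).toNat : ℝ) * Real.log (p n x))
        (g := fun x => ((-(k x)).toNat : ℝ) * Real.log (p n x))
      simp only [sub_mul] at *
      linarith [this]
    calc ∏ x, p n x ^ (k x).toNat
        = Real.exp (Real.log (∏ x, p n x ^ (k x).toNat)) := (Real.exp_log hA).symm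
      _ = Real.exp (Real.log (∏ x, p n x ^ (-(k x)).toNat)) := by rw [hlogeq]
      _ = ∏ x, p n x ^ (-(k x)).toNat := Real.exp_log hB
  -- Step 3: pass to the limit
  have hA : Filter.Tendsto (fun n => ∏ x, p n x ^ (k x).toNat) Filter.atTop
      (nhds (∏ x, q x ^ (k x).toNat)) :=
    tendsto_finset_prod _ (fun x _ => (hlim x).pow _)
  have hB : Filter.Tendsto (fun n => ∏ x, p n x ^ (-(k x)).toNat) Filter.atTop
      (nhds (∏ x, q x ^ (-(k x)).toNat)) :=
    tendsto_finset_prod _ (fun x _ => (hlim x).pow _)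
  have hA' : Filter.Tendsto (fun n => ∏ x, p n x ^ (k x).toNat) Filter.atTop
      (nhds (∏ x, q x ^ (-(k x)).toNat)) := by
    simpa only [heq] using hB
  exact tendsto_nhds_unique hA hA'
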